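/- Let R : ℝ → SO(3) satisfy Ṙ = R Ω̂ and R_d : ℝ → SO(3) satisfy Ṙ_d = R_d Ω̂_d, with e_Ω = Ω − Rᵀ R_d Ω_d and e_R = ½(R_dᵀ R − Rᵀ R_d)^∨. Then ė_R = ½ (tr(Rᵀ R_d) I − Rᵀ R_d) e_Ω. -/

import Mathlib

open Matrix
open scoped Matrix

noncomputable section

attribute [local instance] Matrix.normedAddCommGroup Matrix.normedSpace

/-- The hat map `ℝ³ → so(3)`, sending `x` to the skew matrix with `hat x *ᵥ y = x ×₃ y`. -/
def hat (x : Fin 3 → ℝ) : Matrix (Fin 3) (Fin 3) ℝ :=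
  !![0, -x 2, x 1; x 2, 0, -x 0; -x 1, x 0, 0]

/-- The vee map, inverse of the hat map on skew-symmetric matrices. -/
def vee (S : Matrix (Fin 3) (Fin 3) ℝ) : Fin 3 → ℝ := ![S 2 1, S 0 2, S 1 0]

/-- `SO(3)`: rotation matrices. -/
def SO3 : Set (Matrix (Fin 3) (Fin 3) ℝ) := {R | Rᵀ * R = 1 ∧ R.det = 1}

/-- Euclidean inner product on `ℝ³`. -/
def dot (x y : Fin 3 → ℝ) : ℝ := ∑ i, x i * y i

/-- Euclidean norm on `ℝ³`. -/
def norm3 (x : Fin 3 → ℝ) : ℝ := Real.sqrt (dot x x)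

/-- Attitude error function on `SO(3) × SO(3)`. -/
def Psi (R Rd : Matrix (Fin 3) (Fin 3) ℝ) : ℝ := (1/2 : ℝ) * (1 - Rdᵀ * R).trace

/-- Attitude error vector. -/
def eR (R Rd : Matrix (Fin 3) (Fin 3) ℝ) : Fin 3 → ℝ := (1/2 : ℝ) • vee (Rdᵀ * R - Rᵀ * Rd)

abbrev M3 := Matrix (Fin 3) (Fin 3) ℝ

lemma hat_mul_add (x : Fin 3 → ℝ) (B : M3) :
    hat x * B + Bᵀ * hat x = hat ((B.trace • (1 : M3) - B) *ᵥ x) := by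
  ext i j
  fin_cases i <;> fin_cases j <;>
    simp [hat, Matrix.mul_apply, Matrix.mulVec, Matrix.vecMul, Matrix.trace_fin_three, dotProduct,
      Fin.sum_univ_three, Matrix.one_apply] <;> ring

lemma vee_hat (x : Fin 3 → ℝ) : vee (hat x) = x := by
  funext i; fin_cases i <;> simp [vee, hat]

lemma hat_transpose (x : Fin 3 → ℝ) : (hat x)ᵀ = - hat x := by
  ext i j; fin_cases i <;> fin_cases j <;> simp [hat]

lemma hat_sub (u v : Fin 3 → ℝ) : hat (u - v) = hat u - hat v := by
  ext i j; fin_cases i <;> fin_cases j <;> simp [hat] <;> ring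

lemma adj3 (A : M3) :
    A.adjugate = A * A - A.trace • A + (((A.trace) ^ 2 - (A * A).trace) / 2) • (1 : M3) := by
  ext i j
  fin_cases i <;> fin_cases j <;>
    simp [Matrix.adjugate_fin_three, Matrix.trace_fin_three, Matrix.mul_apply,
      Fin.sum_univ_three, Matrix.one_apply] <;> ring

lemma so3_key (Q : M3) (h1 : Qᵀ * Q = 1) (h2 : Q.det = 1) :
    Qᵀ = Q * Q - Q.trace • Q + Q.trace • (1 : M3) := by
  have hadj : Qᵀ = Q.adjugate := by
    have h := Matrix.mul_adjugate Q
    rw [h2, one_smul] at h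
    calc Qᵀ = Qᵀ * (Q * Q.adjugate) := by rw [h, mul_one]
    _ = (Qᵀ * Q) * Q.adjugate := by rw [mul_assoc]
    _ = Q.adjugate := by rw [h1, one_mul]
  set c : ℝ := ((Q.trace) ^ 2 - (Q * Q).trace) / 2 with hc
  have h3 : Qᵀ = Q * Q - Q.trace • Q + c • (1 : M3) := by rw [hadj, adj3]
  have htr : Q.trace = (Q * Q).trace - Q.trace * Q.trace + c * 3 := by
    have := congrArg Matrix.trace h3
    simpa [Matrix.trace_add, Matrix.trace_sub, Matrix.trace_smul, Matrix.trace_one,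
      smul_eq_mul] using this
  have hceq : c = Q.trace := by rw [hc] at htr ⊢; nlinarith [htr]
  rw [h3, hceq]

lemma entry_deriv {f : ℝ → M3} {f' : M3} {t : ℝ} (h : HasDerivAt f f' t) (i j : Fin 3) :
    HasDerivAt (fun s => f s i j) (f' i j) t :=
  hasDerivAt_pi.mp (hasDerivAt_pi.mp h i) j

lemma mul_deriv {A B : ℝ → M3} {A' B' : M3} {t : ℝ}
    (hA : HasDerivAt A A' t) (hB : HasDerivAt B B' t) :
    HasDerivAt (fun s => A s * B s) (A' * B t + A t * B') t := by
  apply hasDerivAt_pi.mpr; intro i; apply hasDerivAt_pi.mpr; intro j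
  have h : HasDerivAt (fun s => ∑ k, A s i k * B s k j)
      (∑ k, (A' i k * B t k j + A t i k * B' k j)) t :=
    HasDerivAt.fun_sum fun k _ => (entry_deriv hA i k).mul (entry_deriv hB k j)
  simpa [Matrix.mul_apply, Matrix.add_apply, Finset.sum_add_distrib] using h

lemma transpose_deriv {A : ℝ → M3} {A' : M3} {t : ℝ} (hA : HasDerivAt A A' t) :
    HasDerivAt (fun s => (A s)ᵀ) A'ᵀ t := by
  apply hasDerivAt_pi.mpr; intro i; apply hasDerivAt_pi.mpr; intro j
  simpa using entry_deriv hA j i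

/-- `ė_R = ½(tr(RᵀR_d) I − RᵀR_d) e_Ω`. -/
theorem eR_deriv (R Rd : ℝ → Matrix (Fin 3) (Fin 3) ℝ) (Ω Ωd : ℝ → Fin 3 → ℝ) (t : ℝ)
    (hR : ∀ s, R s ∈ SO3) (hRd : ∀ s, Rd s ∈ SO3)
    (hdR : ∀ s, HasDerivAt R (R s * hat (Ω s)) s)
    (hdRd : ∀ s, HasDerivAt Rd (Rd s * hat (Ωd s)) s) :
    HasDerivAt (fun s => eR (R s) (Rd s))
      ((1/2 : ℝ) • ((((R t)ᵀ * Rd t).trace • (1 : Matrix (Fin 3) (Fin 3) ℝ) - (R t)ᵀ * Rd t)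
        *ᵥ (Ω t - ((R t)ᵀ * Rd t) *ᵥ Ωd t))) t := by
  obtain ⟨hR1, hR2⟩ := hR t
  obtain ⟨hRd1, hRd2⟩ := hRd t
  set P := R t with hP
  set Pd := Rd t with hPd
  set Q : M3 := Pᵀ * Pd with hQ
  set M' : M3 := ((Pd * hat (Ωd t))ᵀ * P + Pdᵀ * (P * hat (Ω t))) -
      ((P * hat (Ω t))ᵀ * Pd + Pᵀ * (Pd * hat (Ωd t))) with hM'
  have hM : HasDerivAt (fun s => (Rd s)ᵀ * R s - (R s)ᵀ * Rd s) M' t :=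
    (mul_deriv (transpose_deriv (hdRd t)) (hdR t)).sub
      (mul_deriv (transpose_deriv (hdR t)) (hdRd t))
  have hD : HasDerivAt (fun s => eR (R s) (Rd s)) ((1/2 : ℝ) • vee M') t := by
    rw [hasDerivAt_pi]; intro i
    fin_cases i <;>
      simp only [eR, vee, Pi.smul_apply, smul_eq_mul, Matrix.cons_val_zero, Matrix.cons_val_one,
        Matrix.head_cons, Fin.isValue] <;>
      exact HasDerivAt.const_mul _ (entry_deriv hM _ _)
  have hQT : Qᵀ = Pdᵀ * P := by rw [hQ, Matrix.transpose_mul, Matrix.transpose_transpose]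
  have hPPT : P * Pᵀ = 1 := mul_eq_one_comm.mp hR1
  have hQ1 : Qᵀ * Q = 1 := by
    rw [hQT, hQ, Matrix.mul_assoc, ← Matrix.mul_assoc P, hPPT, Matrix.one_mul, hRd1]
  have hQ2 : Q.det = 1 := by
    rw [hQ, Matrix.det_mul, Matrix.det_transpose, hR2, hRd2, mul_one]
  have hkey := so3_key Q hQ1 hQ2
  have e : M' = (hat (Ω t) * Q + Qᵀ * hat (Ω t)) - (hat (Ωd t) * Qᵀ + Q * hat (Ωd t)) := by
    simp only [hM', hQ, Matrix.transpose_mul, Matrix.transpose_transpose, hat_transpose]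
    noncomm_ring
  clear_value M' Q
  clear hM' hQ hQT
  have e2 : hat (Ωd t) * Qᵀ + Q * hat (Ωd t) = hat ((Q.trace • (1 : M3) - Qᵀ) *ᵥ Ωd t) := by
    have h := hat_mul_add (Ωd t) Qᵀ
    rwa [Matrix.transpose_transpose, Matrix.trace_transpose] at h
  have hM'eq : M' = hat ((Q.trace • (1 : M3) - Q) *ᵥ Ω t - (Q.trace • (1 : M3) - Qᵀ) *ᵥ Ωd t) := by
    rw [e, hat_mul_add, e2, hat_sub]
  have hmat : (Q.trace • (1 : M3) - Q) * Q = Q.trace • (1 : M3) - Qᵀ := by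
    rw [hkey, Matrix.sub_mul, smul_mul_assoc, Matrix.one_mul]
    abel
  have halg : (1/2 : ℝ) • vee M' =
      (1/2 : ℝ) • ((Q.trace • (1 : M3) - Q) *ᵥ (Ω t - Q *ᵥ Ωd t)) := by
    rw [hM'eq, vee_hat, Matrix.mulVec_sub, ← hmat, Matrix.mulVec_mulVec]
  exact halg ▸ hD
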